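/- Let L be a field, V a finite-dimensional L-vector space with an endomorphism φ, and let P(T) ∈ L[T] with P(0) ≠ 0 (so P ∈ L^× + T·L[T] up to scalar). Suppose P_{1+j}(T) := P(p^{1+j}T) admits a decomposition P_{1+j}(xy) = P_{1+j}(x)·y + (1 - b·x²y)(1 - y) as an identity in L[x,y], where b ∈ L. Then for ξ, ζ in finite-dimensional L-vector spaces with invertible endomorphisms φ (with φ⊗φ acting as p^{-1} under a pairing ev), and P_{1+j}(φ)ξ = 0, one has ev(ξ ⊗ ζ) = P_{1+j}(p^{-1})^{-1} · ev(ξ ⊗ (1 - (b/p²)φ^{-1})(1 - φ)ζ), provided P_{1+j}(p^{-1}) ≠ 0. -/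

import Mathlib

/-- abstraction of Lemma 5.37, Step 1 of the Asai regulator formula.
Suppose `P(0) ≠ 0`, `P_{1+j}(T) = P(p^{1+j}T)` satisfies the identity
`P_{1+j}(xy) = P_{1+j}(x)·y + (1 - b·x²y)(1 - y)` in `L[x,y]`, the pairing `ev` on
`V₁ ⊗ V₂` intertwines `φ ⊗ φ` with multiplication by `p⁻¹` (both `φ`'s invertible),
`P_{1+j}(φ)ξ = 0` and `P_{1+j}(p⁻¹) ≠ 0`.  Then
`ev(ξ ⊗ ζ) = P_{1+j}(p⁻¹)⁻¹ · ev(ξ ⊗ (1 - (b/p²)φ⁻¹)(1 - φ)ζ)`. -/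
theorem stmt_9 {L : Type*} [Field L] (p b : L) (hp : p ≠ 0) (j : ℕ)
    (P : Polynomial L) (hP0 : P.coeff 0 ≠ 0)
    {V₁ V₂ : Type*} [AddCommGroup V₁] [Module L V₁] [AddCommGroup V₂] [Module L V₂]
    [FiniteDimensional L V₁] [FiniteDimensional L V₂]
    (Φ₁ : (Module.End L V₁)ˣ) (Φ₂ : (Module.End L V₂)ˣ)
    (Φ : (Module.End L (TensorProduct L V₁ V₂))ˣ)
    (hΦ : (Φ : Module.End L (TensorProduct L V₁ V₂)) =
      TensorProduct.map (Φ₁ : Module.End L V₁) (Φ₂ : Module.End L V₂))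
    (ev : TensorProduct L V₁ V₂ →ₗ[L] L)
    (hev : ∀ v, ev ((Φ : Module.End L (TensorProduct L V₁ V₂)) v) = p⁻¹ * ev v)
    (P1j : Polynomial L) (hP1j : P1j = P.comp (Polynomial.C (p ^ (1 + j)) * Polynomial.X))
    (hid : Polynomial.aeval (MvPolynomial.X 0 * MvPolynomial.X 1 : MvPolynomial (Fin 2) L) P1j =
      Polynomial.aeval (MvPolynomial.X 0 : MvPolynomial (Fin 2) L) P1j * MvPolynomial.X 1 +
        (1 - MvPolynomial.C b * MvPolynomial.X 0 ^ 2 * MvPolynomial.X 1) *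
          (1 - MvPolynomial.X 1))
    (ξ : V₁) (ζ : V₂)
    (hξ : (Polynomial.aeval (Φ₁ : Module.End L V₁) P1j) ξ = 0)
    (hval : P1j.eval p⁻¹ ≠ 0) :
    ev (ξ ⊗ₜ[L] ζ) =
      (P1j.eval p⁻¹)⁻¹ *
        ev (ξ ⊗ₜ[L]
          (((1 : Module.End L V₂) - (b / p ^ 2) • ((Φ₂⁻¹ : (Module.End L V₂)ˣ) : Module.End L V₂))
            (((1 : Module.End L V₂) - (Φ₂ : Module.End L V₂)) ζ))) := by
  -- Step 1: the univariate identity determining P1j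
  have hU : P1j = Polynomial.C (P1j.eval 1) * Polynomial.X
      + (1 - Polynomial.C b * Polynomial.X) * (1 - Polynomial.X) := by
    have hU := congrArg (MvPolynomial.aeval (R := L) (S₁ := Polynomial L) ![1, Polynomial.X]) hid
    simp only [map_add, map_mul, map_sub, map_one, map_pow, MvPolynomial.aeval_X,
      MvPolynomial.aeval_C, ← Polynomial.aeval_algHom_apply] at hU
    simp at hU
    rw [hU]
    congr 1
    congr 1
    rw [show (1 : Polynomial L) = algebraMap L (Polynomial L) 1 by simp,
      Polynomial.aeval_algebraMap_apply]
    simp [Polynomial.algebraMap_eq]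
  set t := P1j.eval 1 with ht
  -- evaluation at p⁻¹
  have hEv : P1j.eval p⁻¹ = 1 + (t - 1 - b) * p⁻¹ + b * p⁻¹ ^ 2 := by
    conv_lhs => rw [hU]
    simp
    ring
  -- abbreviations
  set F₁ : Module.End L V₁ := (Φ₁ : Module.End L V₁) with hF₁
  set F₂ : Module.End L V₂ := (Φ₂ : Module.End L V₂) with hF₂
  set G₂ : Module.End L V₂ := ((Φ₂⁻¹ : (Module.End L V₂)ˣ) : Module.End L V₂) with hG₂
  set x1 : V₁ := F₁ ξ with hx1d
  set x2 : V₁ := F₁ x1 with hx2d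
  set x3 : V₁ := F₁ x2 with hx3d
  -- vector relation from hξ
  have hx0 : ξ = (1 + b - t) • x1 - b • x2 := by
    rw [hU] at hξ
    simp only [map_add, map_mul, map_sub, map_one, Polynomial.aeval_X, Polynomial.aeval_C,
      LinearMap.add_apply, LinearMap.sub_apply, Module.End.mul_apply, Module.End.one_apply,
      Module.algebraMap_end_apply, LinearMap.smul_apply, LinearMap.map_smul] at hξ
    have h2 := congrArg Neg.neg hξ
    rw [neg_zero] at h2
    rw [eq_comm, ← sub_eq_zero, ← h2]
    simp only [hx1d, hx2d]
    module
  have hx1 : x1 = (1 + b - t) • x2 - b • x3 := by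
    have := congrArg F₁ hx0
    simpa [map_sub, map_smul, ← hx2d, ← hx3d] using this
  -- key evaluation identities
  have key1 : ∀ (u : V₁) (v : V₂), ev (F₁ u ⊗ₜ[L] F₂ v) = p⁻¹ * ev (u ⊗ₜ[L] v) := by
    intro u v
    have := hev (u ⊗ₜ[L] v)
    rwa [hΦ, TensorProduct.map_tmul] at this
  have hG₂F₂ : ∀ v : V₂, G₂ (F₂ v) = v := by
    intro v
    have : (G₂ * F₂) v = (1 : Module.End L V₂) v := by
      rw [hG₂, hF₂, Φ₂.inv_mul]
    simpa [Module.End.mul_apply] using this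
  have hF₂G₂ : ∀ v : V₂, F₂ (G₂ v) = v := by
    intro v
    have : (F₂ * G₂) v = (1 : Module.End L V₂) v := by
      rw [hF₂, hG₂, Φ₂.mul_inv]
    simpa [Module.End.mul_apply] using this
  have key2 : ∀ (u : V₁) (v : V₂), ev (u ⊗ₜ[L] G₂ v) = p * ev (F₁ u ⊗ₜ[L] v) := by
    intro u v
    have := key1 u (G₂ v)
    rw [hF₂G₂] at this
    rw [this]
    field_simp
  -- scalar relations
  have S : ∀ v : V₂, ev (ξ ⊗ₜ[L] v)
      = (1 + b - t) * ev (x1 ⊗ₜ[L] v) - b * ev (x2 ⊗ₜ[L] v) := by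
    intro v
    conv_lhs => rw [hx0]
    simp [TensorProduct.sub_tmul, ← TensorProduct.smul_tmul', map_sub, map_smul, smul_eq_mul]
  have S1 : ∀ v : V₂, ev (x1 ⊗ₜ[L] v)
      = (1 + b - t) * ev (x2 ⊗ₜ[L] v) - b * ev (x3 ⊗ₜ[L] v) := by
    intro v
    conv_lhs => rw [hx1]
    simp [TensorProduct.sub_tmul, ← TensorProduct.smul_tmul', map_sub, map_smul, smul_eq_mul]
  set e := ev (ξ ⊗ₜ[L] ζ) with he
  set f := ev (x1 ⊗ₜ[L] ζ) with hf
  set g := ev (x2 ⊗ₜ[L] ζ) with hg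
  set h' := ev (x3 ⊗ₜ[L] ζ) with hh
  have h_f : f = (1 + b - t) * g - b * h' := S1 ζ
  have hφζ : ev (ξ ⊗ₜ[L] F₂ ζ) = (1 + b - t) * (p⁻¹ * e) - b * (p⁻¹ * f) := by
    rw [S (F₂ ζ)]
    rw [show ev (x1 ⊗ₜ[L] F₂ ζ) = p⁻¹ * e from key1 ξ ζ]
    rw [show ev (x2 ⊗ₜ[L] F₂ ζ) = p⁻¹ * f from key1 x1 ζ]
  have hinv : ev (ξ ⊗ₜ[L] G₂ ζ) = p * f := by
    rw [S (G₂ ζ), key2 x1 ζ, key2 x2 ζ, ← hx2d, ← hx3d, ← hg, ← hh, h_f]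
    ring
  -- expand the goal's vector
  have hw : (((1 : Module.End L V₂) - (b / p ^ 2) • G₂) (((1 : Module.End L V₂) - F₂) ζ))
      = (ζ - F₂ ζ) - (b / p ^ 2) • (G₂ ζ - ζ) := by
    simp only [LinearMap.sub_apply, Module.End.one_apply, LinearMap.smul_apply, map_sub,
      hG₂F₂ ζ]
    module
  rw [hw]
  have hexp : ev (ξ ⊗ₜ[L] ((ζ - F₂ ζ) - (b / p ^ 2) • (G₂ ζ - ζ)))
      = e - ev (ξ ⊗ₜ[L] F₂ ζ) - (b / p ^ 2) * (ev (ξ ⊗ₜ[L] G₂ ζ) - e) := by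
    simp [TensorProduct.tmul_sub, TensorProduct.tmul_smul, map_sub, map_smul, smul_eq_mul]
    rfl
  rw [hexp, hφζ, hinv, hEv]
  have hval' : 1 + (t - 1 - b) * p⁻¹ + b * p⁻¹ ^ 2 ≠ 0 := by rw [← hEv]; exact hval
  rw [eq_inv_mul_iff_mul_eq₀ hval']
  field_simp
  ring
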